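/- The derivative of $e_1 \mapsto I_+(e_1,0)$ at $e_1 = 0^+$ equals $-\pi/16$; i.e., $\lim_{e_1 \to 0^+} \frac{I_+(e_1,0) - \pi/2}{e_1} = -\frac{1}{24}\int_0^1 \frac{1+g}{\sqrt{(1-g)g}}\,dg = -\frac{\pi}{16}$. -/

import Mathlib

open Real Set Filter MeasureTheory intervalIntegral


lemma inv_sqrt_le {x y : ℝ} (hx : 0 < x) (hxy : x ≤ y) :
    1 / Real.sqrt y ≤ 1 / Real.sqrt x :=
  one_div_le_one_div_of_le (Real.sqrt_pos.2 hx) (Real.sqrt_le_sqrt hxy)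

lemma half_sqrt {x : ℝ} (hx : 0 < x) :
    1 / Real.sqrt ((1/2)*x) = Real.sqrt 2 * (1 / Real.sqrt x) := by
  rw [Real.sqrt_mul (by norm_num) x]
  have h2 : Real.sqrt (1/2) * Real.sqrt 2 = 1 := by
    rw [← Real.sqrt_mul (by norm_num)]; norm_num
  have hx' : Real.sqrt x ≠ 0 := ne_of_gt (Real.sqrt_pos.2 hx)
  have h2' : Real.sqrt 2 ≠ 0 := by positivity
  field_simp
  exact h2.symm

lemma core_bound {g : ℝ} (hg : g ∈ Ioc (0:ℝ) 1) :
    1 / Real.sqrt ((1-g)*g) ≤ Real.sqrt 2 * (g ^ (-(1/2) : ℝ) + (1-g) ^ (-(1/2) : ℝ)) := by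
  obtain ⟨hg0, hg1⟩ := hg
  have h1g : 0 ≤ 1 - g := by linarith
  have hrw : ∀ x : ℝ, 0 ≤ x → x ^ (-(1/2) : ℝ) = 1 / Real.sqrt x := by
    intro x hx
    rw [Real.rpow_neg hx, Real.sqrt_eq_rpow]
    exact (one_div _).symm
  rw [hrw g hg0.le, hrw (1-g) h1g]
  have hneg1 : 0 ≤ 1 / Real.sqrt (1 - g) := by positivity
  have hneg2 : 0 ≤ 1 / Real.sqrt g := by positivity
  have hs2 : (0:ℝ) < Real.sqrt 2 := by positivity
  rcases le_or_gt g (1/2) with h | h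
  · have h2 : (1/2 : ℝ) * g ≤ (1-g)*g := by nlinarith
    have hle := inv_sqrt_le (by positivity) h2
    have key := half_sqrt hg0
    calc 1 / Real.sqrt ((1-g)*g) ≤ 1 / Real.sqrt ((1/2)*g) := hle
      _ = Real.sqrt 2 * (1 / Real.sqrt g) := key
      _ ≤ Real.sqrt 2 * (1 / Real.sqrt g + 1 / Real.sqrt (1-g)) := by nlinarith
      _ = Real.sqrt 2 * (1 / Real.sqrt g + 1 / Real.sqrt (1-g)) := rfl
  · rcases eq_or_lt_of_le hg1 with rfl | hg1'
    · norm_num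
    have h1g' : (0:ℝ) < 1 - g := by linarith
    have h2 : (1/2 : ℝ) * (1-g) ≤ (1-g)*g := by nlinarith
    have hle := inv_sqrt_le (by positivity) h2
    have key := half_sqrt h1g'
    calc 1 / Real.sqrt ((1-g)*g) ≤ 1 / Real.sqrt ((1/2)*(1-g)) := hle
      _ = Real.sqrt 2 * (1 / Real.sqrt (1-g)) := key
      _ ≤ Real.sqrt 2 * (1 / Real.sqrt g + 1 / Real.sqrt (1-g)) := by nlinarith

lemma intIntB : IntervalIntegrable (fun g : ℝ => (1+g)/Real.sqrt ((1-g)*g)) volume 0 1 := by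
  have hbig : IntervalIntegrable
      (fun g : ℝ => 2 * (Real.sqrt 2 * (g ^ (-(1/2):ℝ) + (1-g) ^ (-(1/2):ℝ)))) volume 0 1 := by
    apply IntervalIntegrable.const_mul
    apply IntervalIntegrable.const_mul
    apply IntervalIntegrable.add
    · exact intervalIntegral.intervalIntegrable_rpow' (by norm_num)
    · have h := (intervalIntegral.intervalIntegrable_rpow' (r := -(1/2))
        (by norm_num) (a := 0) (b := 1)).comp_sub_left 1
      norm_num at h
      exact h.symm
  refine hbig.mono_fun ?_ ?_
  · apply Measurable.aestronglyMeasurable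
    fun_prop
  · rw [Filter.EventuallyLE, ae_restrict_iff' measurableSet_uIoc]
    refine Eventually.of_forall fun g hg => ?_
    rw [Set.uIoc_of_le (by norm_num : (0:ℝ) ≤ 1)] at hg
    obtain ⟨hg0, hg1⟩ := hg
    have h1 : (0:ℝ) ≤ 1 + g := by linarith
    have h2 : (0:ℝ) ≤ 1 / Real.sqrt ((1-g)*g) := by positivity
    have hb := core_bound ⟨hg0, hg1⟩
    have hbnn : (0:ℝ) ≤ Real.sqrt 2 * (g ^ (-(1/2):ℝ) + (1-g) ^ (-(1/2):ℝ)) :=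
      le_trans h2 hb
    simp only [Real.norm_eq_abs]
    rw [abs_of_nonneg (by positivity), abs_of_nonneg (by positivity)]
    calc (1+g)/Real.sqrt ((1-g)*g) ≤ 2 * (1/Real.sqrt ((1-g)*g)) := by
          rw [mul_one_div, div_eq_mul_inv, div_eq_mul_inv]
          exact mul_le_mul_of_nonneg_right (by linarith) (by positivity)
      _ ≤ 2 * (Real.sqrt 2 * (g ^ (-(1/2):ℝ) + (1-g) ^ (-(1/2):ℝ))) := by linarith

lemma intInt1 : IntervalIntegrable (fun g : ℝ => 1/Real.sqrt ((1-g)*g)) volume 0 1 := by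
  refine intIntB.mono_fun (Measurable.aestronglyMeasurable (by fun_prop)) ?_
  rw [Filter.EventuallyLE, ae_restrict_iff' measurableSet_uIoc]
  refine Eventually.of_forall fun g hg => ?_
  rw [Set.uIoc_of_le (by norm_num : (0:ℝ) ≤ 1)] at hg
  obtain ⟨hg0, hg1⟩ := hg
  simp only [Real.norm_eq_abs]
  rw [abs_of_nonneg (by positivity), abs_of_nonneg (by positivity)]
  rw [div_eq_mul_inv, div_eq_mul_inv]
  exact mul_le_mul_of_nonneg_right (by linarith) (by positivity)

lemma sqrt_quad {x : ℝ} : Real.sqrt (1 - (2*x-1)^2) = 2 * Real.sqrt ((1-x)*x) := by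
  rw [show 1 - (2*x-1)^2 = 4*((1-x)*x) by ring,
    Real.sqrt_mul (by norm_num : (0:ℝ) ≤ 4),
    show (4:ℝ) = 2^2 by norm_num, Real.sqrt_sq (by norm_num : (0:ℝ) ≤ 2)]

lemma deriv_arcsin_aff {x : ℝ} (h0 : 0 < x) (h1 : x < 1) :
    HasDerivAt (fun g : ℝ => Real.arcsin (2*g-1))
      (1 / Real.sqrt ((1-x)*x)) x := by
  have hne1 : 2*x-1 ≠ -1 := by intro h; nlinarith [h]
  have hne2 : 2*x-1 ≠ 1 := by intro h; nlinarith [h]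
  have hin : HasDerivAt (fun g : ℝ => 2*g-1) 2 x := by
    simpa using ((hasDerivAt_id x).const_mul 2).sub_const 1
  have := (Real.hasDerivAt_arcsin hne1 hne2).comp x hin
  have hne' : Real.sqrt (1-x) * Real.sqrt x ≠ 0 :=
    ne_of_gt (mul_pos (Real.sqrt_pos.2 (by linarith)) (Real.sqrt_pos.2 h0))
  refine this.congr_deriv ?_
  rw [sqrt_quad]
  field_simp

lemma deriv_sqrt_quad {x : ℝ} (h0 : 0 < x) (h1 : x < 1) :
    HasDerivAt (fun g : ℝ => Real.sqrt ((1-g)*g))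
      ((1-2*x) / (2 * Real.sqrt ((1-x)*x))) x := by
  have hpoly : HasDerivAt (fun g : ℝ => (1-g)*g) (1-2*x) x := by
    have := ((hasDerivAt_id x).const_sub 1).mul (hasDerivAt_id x)
    refine this.congr_deriv ?_
    simp only [id_eq]
    ring
  have hne : (1-x)*x ≠ 0 := by nlinarith
  exact hpoly.sqrt hne

lemma valB : ∫ g in (0:ℝ)..1, (1+g)/Real.sqrt ((1-g)*g) = 3*π/2 := by
  have h := intervalIntegral.integral_eq_sub_of_hasDerivAt_of_le (f := fun g =>
      (3/2) * Real.arcsin (2*g-1) - Real.sqrt ((1-g)*g))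
    (f' := fun g => (1+g)/Real.sqrt ((1-g)*g))
    (by norm_num : (0:ℝ) ≤ 1)
    (Continuous.continuousOn (by
      exact (continuous_const.mul (Real.continuous_arcsin.comp
          (by fun_prop : Continuous fun g : ℝ => 2*g-1))).sub
        (Real.continuous_sqrt.comp (by fun_prop : Continuous fun g : ℝ => (1-g)*g))))
    (fun x hx => by
      obtain ⟨h0, h1⟩ := hx
      have hs : (0:ℝ) < Real.sqrt ((1-x)*x) := Real.sqrt_pos.2 (by nlinarith)
      have := ((deriv_arcsin_aff h0 h1).const_mul (3/2)).sub (deriv_sqrt_quad h0 h1)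
      refine this.congr_deriv ?_
      field_simp
      ring)
    intIntB
  rw [h]
  norm_num [Real.arcsin_one, Real.arcsin_neg_one]
  ring

lemma valA : ∫ g in (0:ℝ)..1, 1/Real.sqrt ((1-g)*g) = π := by
  have h := intervalIntegral.integral_eq_sub_of_hasDerivAt_of_le (f := fun g =>
      Real.arcsin (2*g-1))
    (f' := fun g => 1/Real.sqrt ((1-g)*g))
    (by norm_num : (0:ℝ) ≤ 1)
    (Continuous.continuousOn (Real.continuous_arcsin.comp
      (by fun_prop : Continuous fun g : ℝ => 2*g-1)))
    (fun x hx => deriv_arcsin_aff hx.1 hx.2)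
    intInt1
  rw [h]
  norm_num [Real.arcsin_one, Real.arcsin_neg_one]

lemma keyQ {e1 g : ℝ} (he1 : 0 < e1) (hg0 : 0 < g) (hg1 : g < 1) :
    (1/Real.sqrt ((2/3)*(1-g)*g*(e1*g+6+e1)) - 1/Real.sqrt ((2/3)*(1-g)*g*(0*g+6+0)))/e1
    = -((1+g) / (Real.sqrt ((2/3)*((1-g)*g)) * Real.sqrt 6 * Real.sqrt (e1*(1+g)+6) *
        (Real.sqrt 6 + Real.sqrt (e1*(1+g)+6)))) := by
  have hK : (0:ℝ) < (2/3)*((1-g)*g) := by nlinarith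
  have hA0 : 0 < Real.sqrt ((2/3)*((1-g)*g)) := Real.sqrt_pos.2 hK
  have ht0 : (0:ℝ) < Real.sqrt 6 := by positivity
  have hs : (0:ℝ) < e1*(1+g)+6 := by nlinarith
  have hb0 : 0 < Real.sqrt (e1*(1+g)+6) := Real.sqrt_pos.2 hs
  have h1 : Real.sqrt ((2/3)*(1-g)*g*(e1*g+6+e1))
      = Real.sqrt ((2/3)*((1-g)*g)) * Real.sqrt (e1*(1+g)+6) := by
    rw [← Real.sqrt_mul hK.le]; congr 1; ring
  have h2 : Real.sqrt ((2/3)*(1-g)*g*(0*g+6+0))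
      = Real.sqrt ((2/3)*((1-g)*g)) * Real.sqrt 6 := by
    rw [← Real.sqrt_mul hK.le]; congr 1; ring
  rw [h1, h2]
  set A := Real.sqrt ((2/3)*((1-g)*g))
  set b := Real.sqrt (e1*(1+g)+6)
  set t := Real.sqrt 6
  have hb2 : b^2 = e1*(1+g)+6 := Real.sq_sqrt hs.le
  have ht2 : t^2 = 6 := Real.sq_sqrt (by norm_num)
  have hbt : (0:ℝ) < t + b := by linarith
  field_simp
  linear_combination ht2 - hb2

lemma denom_eq {g : ℝ} (hg0 : 0 ≤ g) :
    Real.sqrt ((2/3)*((1-g)*g)) * Real.sqrt 6 = 2 * Real.sqrt ((1-g)*g) := by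
  rw [Real.sqrt_mul (by norm_num : (0:ℝ) ≤ 2/3), mul_comm (Real.sqrt (2/3)), mul_assoc,
    ← Real.sqrt_mul (by norm_num : (0:ℝ) ≤ 2/3) 6]
  rw [show (2/3:ℝ)*6 = 4 by norm_num, show (4:ℝ) = 2^2 by norm_num,
    Real.sqrt_sq (by norm_num : (0:ℝ) ≤ 2), mul_comm]

lemma phi_zero (g : ℝ) :
    1/Real.sqrt ((2/3)*(1-g)*g*(0*g+6+0)) = (1/2) * (1/Real.sqrt ((1-g)*g)) := by
  rw [show (2/3)*(1-g)*g*(0*g+6+0) = 4*((1-g)*g) by ring,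
    Real.sqrt_mul (by norm_num : (0:ℝ) ≤ 4),
    show (4:ℝ) = 2^2 by norm_num, Real.sqrt_sq (by norm_num : (0:ℝ) ≤ 2)]
  rw [div_mul_div_comm, one_mul]

lemma Rbound {e1 g : ℝ} (he1 : 0 < e1) (hg0 : 0 < g) (hg1 : g < 1) :
    ‖-((1+g) / (Real.sqrt ((2/3)*((1-g)*g)) * Real.sqrt 6 * Real.sqrt (e1*(1+g)+6) *
        (Real.sqrt 6 + Real.sqrt (e1*(1+g)+6))))‖
      ≤ (1/24)*((1+g)/Real.sqrt ((1-g)*g)) := by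
  have ha : (0:ℝ) < Real.sqrt ((1-g)*g) := Real.sqrt_pos.2 (by nlinarith)
  have hA : (0:ℝ) < Real.sqrt ((2/3)*((1-g)*g)) := Real.sqrt_pos.2 (by nlinarith)
  have ht : (0:ℝ) < Real.sqrt 6 := by positivity
  have ht2 : Real.sqrt 6 ^ 2 = 6 := Real.sq_sqrt (by norm_num)
  have htb : Real.sqrt 6 ≤ Real.sqrt (e1*(1+g)+6) := Real.sqrt_le_sqrt (by nlinarith)
  have hb : (0:ℝ) < Real.sqrt (e1*(1+g)+6) := lt_of_lt_of_le ht htb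
  have hAt : Real.sqrt ((2/3)*((1-g)*g)) * Real.sqrt 6 = 2 * Real.sqrt ((1-g)*g) :=
    denom_eq hg0.le
  have hD : 24 * Real.sqrt ((1-g)*g) ≤
      Real.sqrt ((2/3)*((1-g)*g)) * Real.sqrt 6 * Real.sqrt (e1*(1+g)+6) *
        (Real.sqrt 6 + Real.sqrt (e1*(1+g)+6)) := by
    rw [hAt]
    have h1 : Real.sqrt 6 * Real.sqrt 6 ≤ Real.sqrt 6 * Real.sqrt (e1*(1+g)+6) :=
      mul_le_mul_of_nonneg_left htb ht.le
    have h2 : Real.sqrt 6 * Real.sqrt (e1*(1+g)+6) ≤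
        Real.sqrt (e1*(1+g)+6) * Real.sqrt (e1*(1+g)+6) :=
      mul_le_mul_of_nonneg_right htb hb.le
    nlinarith [mul_le_mul_of_nonneg_left h1 ha.le, mul_le_mul_of_nonneg_left h2 ha.le, ht2]
  rw [norm_neg, Real.norm_eq_abs, abs_of_nonneg (by positivity)]
  calc (1+g) / (Real.sqrt ((2/3)*((1-g)*g)) * Real.sqrt 6 * Real.sqrt (e1*(1+g)+6) *
        (Real.sqrt 6 + Real.sqrt (e1*(1+g)+6)))
      ≤ (1+g) / (24 * Real.sqrt ((1-g)*g)) := by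
        apply div_le_div_of_nonneg_left (by linarith) (by positivity) hD
    _ = (1/24)*((1+g)/Real.sqrt ((1-g)*g)) := by
        rw [one_div_mul_eq_div, div_div, mul_comm]

lemma Rlim {g : ℝ} (hg0 : 0 < g) (hg1 : g < 1) :
    Tendsto (fun e1 : ℝ => -((1+g) / (Real.sqrt ((2/3)*((1-g)*g)) * Real.sqrt 6 *
        Real.sqrt (e1*(1+g)+6) * (Real.sqrt 6 + Real.sqrt (e1*(1+g)+6)))))
      (nhdsWithin 0 (Set.Ioi 0))
      (nhds (-(1/24) * ((1+g)/Real.sqrt ((1-g)*g)))) := by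
  have ha : (0:ℝ) < Real.sqrt ((1-g)*g) := Real.sqrt_pos.2 (by nlinarith)
  have hA : (0:ℝ) < Real.sqrt ((2/3)*((1-g)*g)) := Real.sqrt_pos.2 (by nlinarith)
  have ht : (0:ℝ) < Real.sqrt 6 := by positivity
  have ht2 : Real.sqrt 6 ^ 2 = 6 := Real.sq_sqrt (by norm_num)
  have hAt : Real.sqrt ((2/3)*((1-g)*g)) * Real.sqrt 6 = 2 * Real.sqrt ((1-g)*g) :=
    denom_eq hg0.le
  have hDcont : Continuous fun e1 : ℝ => Real.sqrt ((2/3)*((1-g)*g)) * Real.sqrt 6 *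
      Real.sqrt (e1*(1+g)+6) * (Real.sqrt 6 + Real.sqrt (e1*(1+g)+6)) := by fun_prop
  have hD0 : Real.sqrt ((2/3)*((1-g)*g)) * Real.sqrt 6 * Real.sqrt ((0:ℝ)*(1+g)+6) *
      (Real.sqrt 6 + Real.sqrt ((0:ℝ)*(1+g)+6)) = 24 * Real.sqrt ((1-g)*g) := by
    rw [show (0:ℝ)*(1+g)+6 = 6 by ring, hAt]
    nlinarith [ht2]
  have hcont : ContinuousAt (fun e1 : ℝ => -((1+g) / (Real.sqrt ((2/3)*((1-g)*g)) *
      Real.sqrt 6 * Real.sqrt (e1*(1+g)+6) * (Real.sqrt 6 + Real.sqrt (e1*(1+g)+6))))) 0 := by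
    apply ContinuousAt.neg
    apply ContinuousAt.div continuousAt_const hDcont.continuousAt
    rw [hD0]
    positivity
  have h2 := Tendsto.mono_left hcont.tendsto (nhdsWithin_le_nhds (s := Set.Ioi (0:ℝ)))
  convert h2 using 2
  rw [hD0, neg_mul]
  congr 1
  rw [one_div_mul_eq_div, div_div, mul_comm]

/-- The right derivative of `e1 ↦ I₊(e1, 0)` at `0` equals
`-(1/24)∫₀¹ (1+g)/√((1-g)g) dg = -π/16`. -/
theorem Iplus_zero_right_deriv_at_zero :
    Filter.Tendsto
      (fun e1 : ℝ =>
        ((∫ g in (0:ℝ)..1,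
            1 / Real.sqrt ((2/3) * (1 - g) * g * (e1 * g + 6 + e1))) - π/2) / e1)
      (nhdsWithin 0 (Set.Ioi 0))
      (nhds (-(1/24) * ∫ g in (0:ℝ)..1, (1 + g) / Real.sqrt ((1 - g) * g))) ∧
    (-(1/24) * ∫ g in (0:ℝ)..1, (1 + g) / Real.sqrt ((1 - g) * g)) = -(π/16) := by
  have hne1 : ∀ᵐ x : ℝ ∂(volume : MeasureTheory.Measure ℝ), x ≠ 1 := by
    rw [ae_iff]
    simpa [Set.setOf_eq_eq_singleton] using MeasureTheory.measure_singleton (1:ℝ)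
  constructor
  · -- the limit
    have hmeas : ∀ᶠ e1 in nhdsWithin (0:ℝ) (Set.Ioi 0),
        AEStronglyMeasurable (fun g : ℝ =>
          (1/Real.sqrt ((2/3)*(1-g)*g*(e1*g+6+e1))
            - 1/Real.sqrt ((2/3)*(1-g)*g*(0*g+6+0)))/e1)
          (volume.restrict (Set.uIoc (0:ℝ) 1)) :=
      Eventually.of_forall fun e1 => (Measurable.aestronglyMeasurable (by fun_prop))
    have h_bound : ∀ᶠ e1 in nhdsWithin (0:ℝ) (Set.Ioi 0), ∀ᵐ g : ℝ ∂volume,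
        g ∈ Set.uIoc (0:ℝ) 1 →
        ‖(1/Real.sqrt ((2/3)*(1-g)*g*(e1*g+6+e1))
            - 1/Real.sqrt ((2/3)*(1-g)*g*(0*g+6+0)))/e1‖
          ≤ (1/24)*((1+g)/Real.sqrt ((1-g)*g)) := by
      filter_upwards [self_mem_nhdsWithin] with e1 he1
      filter_upwards [hne1] with g hgne hgI
      rw [Set.uIoc_of_le (by norm_num : (0:ℝ) ≤ 1)] at hgI
      have hg1 : g < 1 := lt_of_le_of_ne hgI.2 hgne
      rw [keyQ he1 hgI.1 hg1]
      exact Rbound he1 hgI.1 hg1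
    have hbound_int : IntervalIntegrable
        (fun g : ℝ => (1/24)*((1+g)/Real.sqrt ((1-g)*g))) volume 0 1 :=
      intIntB.const_mul _
    have h_lim : ∀ᵐ g : ℝ ∂volume, g ∈ Set.uIoc (0:ℝ) 1 →
        Tendsto (fun e1 : ℝ =>
          (1/Real.sqrt ((2/3)*(1-g)*g*(e1*g+6+e1))
            - 1/Real.sqrt ((2/3)*(1-g)*g*(0*g+6+0)))/e1)
          (nhdsWithin 0 (Set.Ioi 0))
          (nhds (-(1/24) * ((1+g)/Real.sqrt ((1-g)*g)))) := by
      filter_upwards [hne1] with g hgne hgI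
      rw [Set.uIoc_of_le (by norm_num : (0:ℝ) ≤ 1)] at hgI
      have hg1 : g < 1 := lt_of_le_of_ne hgI.2 hgne
      refine Tendsto.congr' ?_ (Rlim hgI.1 hg1)
      filter_upwards [self_mem_nhdsWithin] with e1 he1
      exact (keyQ he1 hgI.1 hg1).symm
    have hDCT := intervalIntegral.tendsto_integral_filter_of_dominated_convergence
      (μ := volume) (a := (0:ℝ)) (b := 1)
      (F := fun e1 g =>
        (1/Real.sqrt ((2/3)*(1-g)*g*(e1*g+6+e1))
          - 1/Real.sqrt ((2/3)*(1-g)*g*(0*g+6+0)))/e1)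
      (f := fun g => -(1/24) * ((1+g)/Real.sqrt ((1-g)*g)))
      (bound := fun g => (1/24)*((1+g)/Real.sqrt ((1-g)*g)))
      hmeas h_bound hbound_int h_lim
    rw [show (∫ g in (0:ℝ)..1, -(1/24) * ((1+g)/Real.sqrt ((1-g)*g)))
        = -(1/24) * ∫ g in (0:ℝ)..1, (1+g)/Real.sqrt ((1-g)*g) from
      intervalIntegral.integral_const_mul _ _] at hDCT
    refine Filter.Tendsto.congr' ?_ hDCT
    filter_upwards [self_mem_nhdsWithin] with e1 he1
    have hint0 : IntervalIntegrable
        (fun g : ℝ => 1/Real.sqrt ((2/3)*(1-g)*g*(0*g+6+0))) volume 0 1 := by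
      simp only [phi_zero]
      exact intInt1.const_mul _
    have hI0 : (∫ g in (0:ℝ)..1, 1/Real.sqrt ((2/3)*(1-g)*g*(0*g+6+0))) = π/2 := by
      simp only [phi_zero]
      rw [intervalIntegral.integral_const_mul, valA]
      ring
    have hinte : IntervalIntegrable
        (fun g : ℝ => 1/Real.sqrt ((2/3)*(1-g)*g*(e1*g+6+e1))) volume 0 1 := by
      refine hint0.mono_fun (Measurable.aestronglyMeasurable (by fun_prop)) ?_
      rw [Filter.EventuallyLE, MeasureTheory.ae_restrict_iff' measurableSet_uIoc]
      refine Eventually.of_forall fun g hg => ?_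
      rw [Set.uIoc_of_le (by norm_num : (0:ℝ) ≤ 1)] at hg
      obtain ⟨hg0, hg1⟩ := hg
      simp only [Real.norm_eq_abs]
      rw [abs_of_nonneg (by positivity), abs_of_nonneg (by positivity)]
      rcases lt_or_eq_of_le hg1 with hg1' | rfl
      · have harg0 : (0:ℝ) < (2/3)*(1-g)*g*(0*g+6+0) := by nlinarith
        have harg : (2/3)*(1-g)*g*(0*g+6+0) ≤ (2/3)*(1-g)*g*(e1*g+6+e1) := by
          have he1' : (0:ℝ) < e1 := he1
          nlinarith [mul_nonneg (mul_nonneg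
            (by nlinarith : (0:ℝ) ≤ (2/3)*(1-g)*g) he1'.le)
            (by linarith : (0:ℝ) ≤ 1+g)]
        exact inv_sqrt_le harg0 harg
      · norm_num
    rw [← hI0, ← intervalIntegral.integral_sub hinte hint0,
      ← intervalIntegral.integral_div]
  · -- the value
    rw [valB]
    ring
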